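/- Let 0 < λ < ρ < 1, γ = (1-λ-ρ)/(1-λ-ρ+2λρ), ξ_λ = 2(ρ-λ)λ/(1-λ-ρ+2λρ), and N ≠ 0 a real number. Define P = ((1+γ)N, (1-γ)N) and A_λ = (((λ-1)/λ)ξ_λ N, ξ_λ N). Then P - A_λ is a positive scalar multiple of ((1-λ)², λ²). -/

import Mathlib

theorem characteristic_direction (lam rho N : ℝ) (h0 : 0 < lam) (h1 : lam < rho)
    (h2 : rho < 1) (hN : 0 < N) :
    let γ := (1 - lam - rho) / (1 - lam - rho + 2 * lam * rho)
    let ξ := 2 * (rho - lam) * lam / (1 - lam - rho + 2 * lam * rho)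
    let P : ℝ × ℝ := ((1 + γ) * N, (1 - γ) * N)
    let A : ℝ × ℝ := ((lam - 1) / lam * ξ * N, ξ * N)
    ∃ c : ℝ, 0 < c ∧ P - A = c • (((1 - lam) ^ 2, lam ^ 2) : ℝ × ℝ) := by
  intro γ ξ P A
  have hD : 0 < 1 - lam - rho + 2 * lam * rho := by nlinarith
  refine ⟨2 * N / (1 - lam - rho + 2 * lam * rho), by positivity, ?_⟩
  have hD' : (1 - lam - rho + 2 * lam * rho) ≠ 0 := ne_of_gt hD
  simp only [P, A, γ, ξ, Prod.ext_iff, Prod.smul_mk, Prod.mk_sub_mk, smul_eq_mul,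
    Prod.fst_sub, Prod.snd_sub]
  constructor <;> field_simp [(ne_of_gt (by linarith) : (1 - lam - rho + lam * rho * 2) ≠ 0)] <;> ring
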